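/- arXiv:1204.1163 — 4 statements merged into one kernel-verified Lean document; each statement's English description precedes it below -/
import Mathlib

section
/- Let G be a locally compact, second-countable topological group (this covers the paper's setting of a connected complex Lie group). Let Γ ⊆ G be a discrete subgroup and let H₁ ⊆ H₂ be closed connected subgroups of G such that Γ normalizes both H₁ and H₂ (so that the product sets Γ·H₁ and Γ·H₂ are subgroups of G). If the set Γ·H₂ is closed in G and the set (Γ ∩ H₂)·H₁ is closed in G (equivalently, closed in H₂, since H₂ is closed in G), then the set Γ·H₁ is closed in G. -/
open Pointwise
/-- Lemma 8.3: Let `G` be a locally compact, second-countable topological group,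
`Γ` a discrete subgroup, and `H₁ ⊆ H₂` closed connected subgroups normalized by `Γ`.
If `Γ·H₂` is closed in `G` and `(Γ ∩ H₂)·H₁` is closed in `G`, then `Γ·H₁` is closed. -/
theorem closed_product_of_discrete_and_closed_subgroups
    {G : Type*} [Group G] [TopologicalSpace G] [IsTopologicalGroup G]
    [LocallyCompactSpace G] [SecondCountableTopology G]
    (Γ H₁ H₂ : Subgroup G)
    (hΓdisc : DiscreteTopology Γ)
    (hH₁closed : IsClosed (H₁ : Set G)) (hH₂closed : IsClosed (H₂ : Set G))
    (hH₁conn : IsConnected (H₁ : Set G)) (hH₂conn : IsConnected (H₂ : Set G))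
    (h12 : H₁ ≤ H₂)
    (hnorm₁ : Γ ≤ Subgroup.normalizer (H₁ : Set G)) (hnorm₂ : Γ ≤ Subgroup.normalizer (H₂ : Set G))
    (hΓH₂ : IsClosed ((Γ : Set G) * (H₂ : Set G)))
    (hinter : IsClosed (((Γ : Set G) ∩ (H₂ : Set G)) * (H₁ : Set G))) :
    IsClosed ((Γ : Set G) * (H₁ : Set G)) := by
  classical
  set S : Set G := (Γ : Set G) * (H₂ : Set G) with hSdef
  have hΓS : (Γ : Set G) ⊆ S := fun γ hγ => ⟨γ, hγ, 1, H₂.one_mem, mul_one γ⟩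
  have hH₂S : (H₂ : Set G) ⊆ S := fun h hh => ⟨1, Γ.one_mem, h, hh, one_mul h⟩
  -- S is closed under multiplication
  have hmul : ∀ a ∈ S, ∀ b ∈ S, a * b ∈ S := by
    rintro _ ⟨γ₁, hγ₁, h₁, hh₁, rfl⟩ _ ⟨γ₂, hγ₂, h₂, hh₂, rfl⟩
    refine ⟨γ₁ * γ₂, Γ.mul_mem hγ₁ hγ₂, (γ₂⁻¹ * h₁ * γ₂) * h₂, H₂.mul_mem ?_ hh₂, by group⟩
    have hn : γ₂⁻¹ ∈ Subgroup.normalizer (H₂ : Set G) := (Subgroup.normalizer (H₂ : Set G)).inv_mem (hnorm₂ hγ₂)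
    have := (Subgroup.mem_normalizer_iff.mp hn h₁).mp hh₁
    simpa using this
  -- Γ is countable
  haveI : Countable Γ := by
    haveI := hΓdisc
    exact TopologicalSpace.separableSpace_iff_countable.mp inferInstance
  -- Baire: H₂ is "open in S" near 1 : ∃ open V ∋ 1 with V ∩ S ⊆ H₂
  obtain ⟨V, hVopen, hV1, hVS⟩ :
      ∃ V : Set G, IsOpen V ∧ (1 : G) ∈ V ∧ ∀ v ∈ V, v ∈ S → v ∈ (H₂ : Set G) := by
    haveI : LocallyCompactSpace S := hΓH₂.locallyCompactSpace
    haveI : Nonempty S := ⟨⟨1, hΓS Γ.one_mem⟩⟩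
    have hcover : (⋃ γ : Γ, {x : S | (x : G) ∈ (γ : G) • (H₂ : Set G)}) = Set.univ := by
      ext x
      simp only [Set.mem_iUnion, Set.mem_univ, iff_true, Set.mem_setOf_eq]
      obtain ⟨γ, hγ, h, hh, hx⟩ := x.2
      exact ⟨⟨γ, hγ⟩, ⟨h, hh, hx⟩⟩
    have hclosed : ∀ γ : Γ, IsClosed {x : S | (x : G) ∈ (γ : G) • (H₂ : Set G)} := by
      intro γ
      exact (hH₂closed.smul (γ : G)).preimage continuous_subtype_val
    obtain ⟨γ₀, x, hx⟩ := nonempty_interior_of_iUnion_of_closed hclosed hcover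
    -- unpack interior in the subtype
    have hmem := interior_subset hx
    obtain ⟨h, hh, hxh⟩ := hmem
    have hxh' : (γ₀ : G) * h = (x : G) := hxh
    rw [mem_interior_iff_mem_nhds, nhds_subtype_eq_comap, Filter.mem_comap] at hx
    obtain ⟨U, hU, hUsub⟩ := hx
    obtain ⟨U', hU'U, hU'open, hxU'⟩ := mem_nhds_iff.mp hU
    refine ⟨((γ₀ : G) * h)⁻¹ • U', hU'open.smul _, ?_, ?_⟩
    · exact ⟨(γ₀ : G) * h, by rw [hxh']; exact hxU', show ((γ₀:G)*h)⁻¹ * ((γ₀:G)*h) = 1 by group⟩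
    · intro v hv hvS
      obtain ⟨u, hu, huv⟩ := hv
      have hxv : (γ₀ : G) * h * v ∈ S :=
        hmul _ ⟨(γ₀ : G), γ₀.2, h, hh, rfl⟩ _ hvS
      have : (⟨(γ₀ : G) * h * v, hxv⟩ : S) ∈ {x : S | (x : G) ∈ (γ₀ : G) • (H₂ : Set G)} := by
        apply hUsub
        show (γ₀ : G) * h * v ∈ U
        apply hU'U
        have huv' : ((γ₀:G) * h)⁻¹ * u = v := huv
        have : (γ₀ : G) * h * v = u := by rw [← huv']; group
        rwa [this]
      obtain ⟨w, hw, hwv⟩ := this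
      have hhv : h * v ∈ H₂ := by
        have hwv' : (γ₀:G) * w = (γ₀:G) * (h * v) := by
          have : (γ₀:G) * w = (γ₀:G) * h * v := hwv
          rw [this]; group
        have : h * v = w := (mul_left_cancel hwv').symm
        rwa [this]
      have : v = h⁻¹ * (h * v) := by group
      rw [this]
      exact H₂.mul_mem (H₂.inv_mem hh) hhv
  -- now the closure argument
  refine isClosed_of_closure_subset ?_
  intro x hx
  have hxS : x ∈ S := by
    have hsub : (Γ : Set G) * (H₁ : Set G) ⊆ S :=
      Set.mul_subset_mul_left (fun a ha => h12 ha)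
    have := closure_mono hsub hx
    rwa [hΓH₂.closure_eq] at this
  obtain ⟨γ, hγ, h₂, hh₂, hxe⟩ := hxS
  -- h₂ ∈ closure (Γ * H₁)
  have hy : h₂ ∈ closure ((Γ : Set G) * (H₁ : Set G)) := by
    have h1 : h₂ ∈ γ⁻¹ • closure ((Γ : Set G) * (H₁ : Set G)) :=
      ⟨x, hx, show γ⁻¹ * x = h₂ by rw [← hxe]; group⟩
    rw [← closure_smul] at h1
    refine closure_mono ?_ h1
    rintro _ ⟨z, ⟨γ', hγ', h₁, hh₁, rfl⟩, rfl⟩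
    exact ⟨γ⁻¹ * γ', Γ.mul_mem (Γ.inv_mem hγ) hγ', h₁, hh₁,
      show γ⁻¹ * γ' * h₁ = γ⁻¹ * (γ' * h₁) by group⟩
  -- h₂ ∈ closure ((Γ ∩ H₂) * H₁)
  have hy2 : h₂ ∈ ((Γ : Set G) ∩ (H₂ : Set G)) * (H₁ : Set G) := by
    rw [← hinter.closure_eq]
    rw [mem_closure_iff] at hy ⊢
    intro O hO hh₂O
    have hopen : IsOpen (O ∩ h₂ • V) := hO.inter (hVopen.smul _)
    have hmemO : h₂ ∈ O ∩ h₂ • V := ⟨hh₂O, ⟨1, hV1, mul_one h₂⟩⟩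
    obtain ⟨w, ⟨hwO, hwV⟩, hwΓH₁⟩ := hy _ hopen hmemO
    obtain ⟨γ', hγ', h₁, hh₁, hwe⟩ := hwΓH₁
    -- w ∈ H₂
    obtain ⟨v, hv, hve⟩ := hwV
    have hwS : w ∈ S := ⟨γ', hγ', h₁, h12 hh₁, hwe⟩
    have hve' : h₂ * v = w := hve
    have hvS : v ∈ S := by
      have : v = h₂⁻¹ * w := by rw [← hve']; group
      rw [this]
      exact hmul _ (hH₂S (H₂.inv_mem hh₂)) _ hwS
    have hvH₂ : v ∈ (H₂ : Set G) := hVS v hv hvS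
    have hwH₂ : w ∈ (H₂ : Set G) := by
      have : w = h₂ * v := hve'.symm
      rw [this]
      exact H₂.mul_mem hh₂ hvH₂
    have hγ'H₂ : γ' ∈ (H₂ : Set G) := by
      have : γ' = w * h₁⁻¹ := by rw [← hwe]; group
      rw [this]
      exact H₂.mul_mem hwH₂ (H₂.inv_mem (h12 hh₁))
    exact ⟨w, hwO, ⟨γ', ⟨hγ', hγ'H₂⟩, h₁, hh₁, hwe⟩⟩
  obtain ⟨γ'', ⟨hγ''Γ, _⟩, h₁, hh₁, he⟩ := hy2
  exact ⟨γ * γ'', Γ.mul_mem hγ hγ''Γ, h₁, hh₁, by rw [← hxe, ← he]; group⟩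
end

section
/- Let X and Y be Hausdorff topological spaces and let p : X → Y be a continuous, open, surjective map. Let ρ : X → ℝ be a continuous exhaustion, i.e., the sublevel set {x ∈ X : ρ(x) ≤ c} is compact for every c ∈ ℝ. Define ρ_Y : Y → ℝ by ρ_Y(y) = inf { ρ(x) : x ∈ p⁻¹(y) }. Then: (a) for every y ∈ Y the infimum is attained, i.e., there exists x ∈ p⁻¹(y) with ρ(x) = ρ_Y(y) (in particular ρ_Y is real-valued); and (b) ρ_Y is continuous on Y. -/
/-- Pushing down a continuous exhaustion along a continuous open surjection:
the fiberwise infimum is attained and defines a continuous function on the base. -/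
theorem pushdown_exhaustion_attained_and_continuous
    {X Y : Type*} [TopologicalSpace X] [TopologicalSpace Y] [T2Space X] [T2Space Y]
    (p : X → Y) (hpc : Continuous p) (hpo : IsOpenMap p) (hps : Function.Surjective p)
    (ρ : X → ℝ) (hρc : Continuous ρ)
    (hexh : ∀ c : ℝ, IsCompact {x : X | ρ x ≤ c})
    (ρY : Y → ℝ) (hρY : ∀ y : Y, ρY y = sInf (ρ '' (p ⁻¹' {y}))) :
    (∀ y : Y, ∃ x : X, p x = y ∧ ρ x = ρY y) ∧ Continuous ρY := by
  have attain : ∀ y : Y, ∃ x : X, p x = y ∧ IsLeast (ρ '' (p ⁻¹' {y})) (ρ x) := by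
    intro y
    obtain ⟨x₀, hx₀⟩ := hps y
    have hfc : IsClosed (p ⁻¹' {y}) := isClosed_singleton.preimage hpc
    have hKc : IsCompact ({x : X | ρ x ≤ ρ x₀} ∩ p ⁻¹' {y}) :=
      (hexh (ρ x₀)).inter_right hfc
    have hKne : ({x : X | ρ x ≤ ρ x₀} ∩ p ⁻¹' {y}).Nonempty := ⟨x₀, show ρ x₀ ≤ ρ x₀ from le_refl _, hx₀⟩
    obtain ⟨x, hxK, hxmin'⟩ := hKc.exists_isMinOn hKne hρc.continuousOn
    have hxmin : ∀ z ∈ {x : X | ρ x ≤ ρ x₀} ∩ p ⁻¹' {y}, ρ x ≤ ρ z := fun z hz => hxmin' hz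
    refine ⟨x, hxK.2, ⟨x, hxK.2, rfl⟩, ?_⟩
    rintro r ⟨z, hz, rfl⟩
    by_cases hz' : ρ z ≤ ρ x₀
    · exact hxmin z ⟨hz', hz⟩
    · exact le_trans (hxmin x₀ ⟨show ρ x₀ ≤ ρ x₀ from le_refl _, hx₀⟩) (le_of_not_ge hz')
  have attain' : ∀ y : Y, ∃ x : X, p x = y ∧ ρ x = ρY y := by
    intro y
    obtain ⟨x, hpx, hl⟩ := attain y
    exact ⟨x, hpx, by rw [hρY y, hl.csInf_eq]⟩
  refine ⟨attain', ?_⟩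
  have hval : ∀ x : X, ρY (p x) ≤ ρ x := by
    intro x
    obtain ⟨x', hpx', hl⟩ := attain (p x)
    have h2 : ρ x' ≤ ρ x := hl.2 ⟨x, rfl, rfl⟩
    have : ρY (p x) = ρ x' := by rw [hρY, hl.csInf_eq]
    linarith
  have hopenIio : ∀ c : ℝ, IsOpen (ρY ⁻¹' Set.Iio c) := by
    intro c
    have heq : ρY ⁻¹' Set.Iio c = p '' {x : X | ρ x < c} := by
      ext y
      constructor
      · intro h
        obtain ⟨x, hpx, hx⟩ := attain' y
        exact ⟨x, by simp only [Set.mem_setOf_eq, hx]; exact h, hpx⟩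
      · rintro ⟨x, hx, rfl⟩
        exact lt_of_le_of_lt (hval x) hx
    rw [heq]
    exact hpo _ (isOpen_lt hρc continuous_const)
  have hopenIoi : ∀ c : ℝ, IsOpen (ρY ⁻¹' Set.Ioi c) := by
    intro c
    have heq : ρY ⁻¹' Set.Ioi c = (p '' {x : X | ρ x ≤ c})ᶜ := by
      ext y
      simp only [Set.mem_preimage, Set.mem_Ioi, Set.mem_compl_iff, Set.mem_image,
        Set.mem_setOf_eq, not_exists, not_and]
      constructor
      · rintro h x hx rfl
        exact absurd (le_trans (hval x) hx) (not_le.mpr h)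
      · intro h
        obtain ⟨x, hpx, hx⟩ := attain' y
        by_contra hle
        exact h x (hx.le.trans (not_lt.mp hle)) hpx
    rw [heq]
    exact (((hexh c).image hpc).isClosed).isOpen_compl
  have hgen : @Continuous Y ℝ _
      (TopologicalSpace.generateFrom { s | ∃ a, s = Set.Ioi a ∨ s = Set.Iio a }) ρY := by
    rw [continuous_generateFrom_iff]
    rintro s ⟨a, (rfl | rfl)⟩
    · exact hopenIoi a
    · exact hopenIio a
  have ht : (inferInstance : TopologicalSpace ℝ) = TopologicalSpace.generateFrom { s | ∃ a, s = Set.Ioi a ∨ s = Set.Iio a } := OrderTopology.topology_eq_generate_intervals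
  rw [← ht] at hgen
  exact hgen
end

section
/- Let X and Y be Hausdorff topological spaces, let p : X → Y be a continuous, open, surjective map, and let ρ : X → ℝ be a continuous exhaustion, i.e., {x ∈ X : ρ(x) ≤ c} is compact for every c ∈ ℝ. Define ρ_Y : Y → ℝ by ρ_Y(y) = inf { ρ(x) : x ∈ p⁻¹(y) }. Then for every c ∈ ℝ one has the inclusion {y ∈ Y : ρ_Y(y) ≤ c} ⊆ p({x ∈ X : ρ(x) ≤ c}), and the sublevel set {y ∈ Y : ρ_Y(y) ≤ c} is compact. Hence ρ_Y is a continuous exhaustion of Y. -/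
/-- Pushing down a continuous exhaustion along a continuous open surjection:
the sublevel sets of the pushed-down function are contained in the image of the
corresponding sublevel sets and are compact; hence the base inherits an exhaustion. -/
theorem pushdown_exhaustion_sublevel_compact
    {X Y : Type*} [TopologicalSpace X] [TopologicalSpace Y] [T2Space X] [T2Space Y]
    (p : X → Y) (hpc : Continuous p) (hpo : IsOpenMap p) (hps : Function.Surjective p)
    (ρ : X → ℝ) (hρc : Continuous ρ)
    (hexh : ∀ c : ℝ, IsCompact {x : X | ρ x ≤ c})
    (ρY : Y → ℝ) (hρY : ∀ y : Y, ρY y = sInf (ρ '' (p ⁻¹' {y}))) :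
    ∀ c : ℝ, {y : Y | ρY y ≤ c} ⊆ p '' {x : X | ρ x ≤ c} ∧ IsCompact {y : Y | ρY y ≤ c} := by
  -- global lower bound for ρ (given any point of X)
  have glb : ∀ x0 : X, ∃ m : ℝ, ∀ x, m ≤ ρ x := by
    intro x0
    obtain ⟨z, hzK, hzmin⟩ := (hexh (ρ x0)).exists_isMinOn ⟨x0, by simp⟩ hρc.continuousOn
    refine ⟨ρ z, fun x => ?_⟩
    by_cases h : ρ x ≤ ρ x0
    · exact isMinOn_iff.mp hzmin x h
    · exact le_trans (isMinOn_iff.mp hzmin x0 (by simp)) (le_of_not_ge h)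
  have hbdd : ∀ y : Y, BddBelow (ρ '' (p ⁻¹' {y})) := by
    intro y
    obtain ⟨x0, hx0⟩ := hps y
    obtain ⟨m, hm⟩ := glb x0
    exact ⟨m, by rintro _ ⟨x, -, rfl⟩; exact hm x⟩
  intro c
  have key : {y : Y | ρY y ≤ c} = p '' {x : X | ρ x ≤ c} := by
    apply Set.Subset.antisymm
    · intro y hy
      obtain ⟨x0, hx0⟩ := hps y
      set S := ρ '' (p ⁻¹' {y}) with hS
      have hSne : S.Nonempty := ⟨ρ x0, x0, hx0, rfl⟩
      have hinf : sInf S ≤ c := (hρY y ▸ hy : sInf S ≤ c)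
      -- the infimum over the fiber is attained
      obtain ⟨a, haS, halt⟩ := Real.lt_sInf_add_pos hSne (by norm_num : (0:ℝ) < 1)
      obtain ⟨x1, hx1f, hx1⟩ := haS
      have hKcl : IsClosed (p ⁻¹' {y}) := isClosed_singleton.preimage hpc
      have hKc : IsCompact (p ⁻¹' {y} ∩ {x | ρ x ≤ sInf S + 1}) :=
        (hexh (sInf S + 1)).inter_left hKcl
      have hKne : (p ⁻¹' {y} ∩ {x | ρ x ≤ sInf S + 1}).Nonempty :=
        ⟨x1, hx1f, by simpa [hx1] using halt.le⟩
      obtain ⟨w, hwK, hwmin⟩ := hKc.exists_isMinOn hKne hρc.continuousOn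
      have hwfib : ∀ x ∈ p ⁻¹' {y}, ρ w ≤ ρ x := by
        intro x hx
        by_cases h : ρ x ≤ sInf S + 1
        · exact isMinOn_iff.mp hwmin x ⟨hx, h⟩
        · exact le_trans hwK.2 (le_of_not_ge h)
      have hw_le : ρ w ≤ sInf S := le_csInf hSne (by rintro _ ⟨x, hx, rfl⟩; exact hwfib x hx)
      exact ⟨w, le_trans hw_le hinf, hwK.1⟩
    · rintro _ ⟨x, hx, rfl⟩
      have : ρY (p x) ≤ ρ x := by
        rw [hρY]
        exact csInf_le (hbdd (p x)) ⟨x, rfl, rfl⟩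
      exact le_trans this hx
  refine ⟨key.le, ?_⟩
  rw [key]
  exact ((hexh c).image hpc)
end

section
/- Let 𝔤 be a Lie algebra over ℂ which is perfect, i.e., [𝔤, 𝔤] = 𝔤, and let 𝔩 be a real Lie subalgebra of 𝔤 (viewing 𝔤 as a real Lie algebra by restriction of scalars) satisfying: (i) 𝔩 is an ideal of 𝔤, i.e., [x, y] ∈ 𝔩 for all x ∈ 𝔤 and y ∈ 𝔩; and (ii) 𝔩 + i·𝔩 = 𝔤, where i·𝔩 = { i•x : x ∈ 𝔩 }. Then 𝔩 = 𝔤. -/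
/-- If `g` is a perfect complex Lie algebra and `l` is a real Lie subalgebra which is
an ideal of `g` and satisfies `l + i·l = g`, then `l = g`. -/
theorem real_ideal_with_full_complexification_eq_top
    {g : Type*} [LieRing g] [LieAlgebra ℂ g]
    (hperfect : Submodule.span ℂ {z : g | ∃ a b : g, ⁅a, b⁆ = z} = ⊤)
    (l : Submodule ℝ g)
    (hideal : ∀ x : g, ∀ y ∈ l, ⁅x, y⁆ ∈ l)
    (hsum : ∀ z : g, ∃ a ∈ l, ∃ b ∈ l, z = a + Complex.I • b) :
    ∀ z : g, z ∈ l := by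
  intro z
  let N : Submodule ℂ g :=
  { carrier := {w | ∀ c : ℂ, c • w ∈ l}
    add_mem' := fun hx hy c => by
      rw [smul_add]; exact l.add_mem (hx c) (hy c)
    zero_mem' := fun c => by simp
    smul_mem' := fun c' w hw c => by
      rw [smul_smul]; exact hw (c * c') }
  have hN : Submodule.span ℂ {z : g | ∃ a b : g, ⁅a, b⁆ = z} ≤ N := by
    rw [Submodule.span_le]
    rintro w ⟨a, b, rfl⟩ c
    obtain ⟨b₁, hb₁, b₂, hb₂, rfl⟩ := hsum b
    have key : c • ⁅a, b₁ + Complex.I • b₂⁆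
        = ⁅c • a, b₁⁆ + ⁅(c * Complex.I) • a, b₂⁆ := by
      simp [lie_add, lie_smul, smul_lie, smul_add, smul_smul]
    rw [key]
    exact l.add_mem (hideal _ _ hb₁) (hideal _ _ hb₂)
  have hz : z ∈ N := hN (by rw [hperfect]; exact Submodule.mem_top)
  simpa using hz 1
end
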